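/- Let d ≥ 2 and on (ℂ^d)^{⊗3} let H = S_{12} + S_{13}. If t ∈ ℝ satisfies e^{3it} = 1 (i.e., t = 2mπ/3 for some integer m), then for every ψ ∈ ℂ^d, e^{−itH}(ψ⊗|0⟩⊗|0⟩) = e^{−2it}·(ψ⊗|0⟩⊗|0⟩): the evolution acts as a global phase on all such initial states. Consequently at these times the state of each observer's memory is independent of ψ and the procedure is not a measurement. -/

import Mathlib

open Matrix Kronecker
open scoped ComplexOrder

noncomputable section

abbrev Mat (n : ℕ) := Matrix (Fin n) (Fin n) ℂ

/-- A density matrix: positive semidefinite with trace 1. -/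
def IsDensity {n : Type*} [Fintype n] (ρ : Matrix n n ℂ) : Prop :=
  ρ.PosSemidef ∧ ρ.trace = 1

/-- The rank-one projector `|ψ⟩⟨ψ|`. -/
def proj {n : Type*} (ψ : n → ℂ) : Matrix n n ℂ :=
  Matrix.of fun i j => ψ i * star (ψ j)

/-- Partial trace over the first tensor factor. -/
def trFst {a b : Type*} [Fintype a] (X : Matrix (a × b) (a × b) ℂ) : Matrix b b ℂ :=
  Matrix.of fun j l => ∑ i : a, X (i, j) (i, l)

/-- Partial trace over the second tensor factor. -/
def trSnd {a b : Type*} [Fintype b] (X : Matrix (a × b) (a × b) ℂ) : Matrix a a ℂ :=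
  Matrix.of fun i k => ∑ j : b, X (i, j) (k, j)

/-- `id ⊗ Φ` acting on matrices over a product index type. -/
def idTensor {k d m : Type*} (Φ : Matrix d d ℂ → Matrix m m ℂ)
    (X : Matrix (k × d) (k × d) ℂ) : Matrix (k × m) (k × m) ℂ :=
  Matrix.of fun p q => Φ (Matrix.of fun j l => X (p.1, j) (q.1, l)) p.2 q.2

/-- Complete positivity. -/
def IsCP {d m : ℕ} (Φ : Mat d → Mat m) : Prop :=
  ∀ (k : ℕ) (X : Matrix (Fin k × Fin d) (Fin k × Fin d) ℂ),
    X.PosSemidef → (idTensor Φ X).PosSemidef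

/-- Trace preservation. -/
def IsTP {d m : ℕ} (Φ : Mat d → Mat m) : Prop :=
  ∀ X, (Φ X).trace = X.trace

/-- A quantum channel: linear, completely positive, trace preserving. -/
def IsChannel {d m : ℕ} (Φ : Mat d → Mat m) : Prop :=
  IsLinearMap ℂ Φ ∧ IsCP Φ ∧ IsTP Φ

/-- The maximally entangled unit vector `|Φ⁺⟩ = (1/√d) ∑ₖ |k⟩⊗|k⟩`. -/
def phiPlusVec (d : ℕ) : Fin d × Fin d → ℂ :=
  fun p => if p.1 = p.2 then ((Real.sqrt d : ℝ) : ℂ)⁻¹ else 0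

/-- The density matrix of the maximally entangled state. -/
def phiPlus (d : ℕ) : Matrix (Fin d × Fin d) (Fin d × Fin d) ℂ :=
  proj (phiPlusVec d)

/-- Von Neumann entropy `S(ρ) = -∑ λᵢ log λᵢ` over the eigenvalues of `ρ`. -/
def entropy {n : Type*} [Fintype n] [DecidableEq n] (ρ : Matrix n n ℂ) : ℝ :=
  if h : ρ.IsHermitian then -∑ i, h.eigenvalues i * Real.log (h.eigenvalues i) else 0

/-- Quantum mutual information of a bipartite state. -/
def mutualInfo {a b : Type*} [Fintype a] [Fintype b] [DecidableEq a] [DecidableEq b]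
    (τ : Matrix (a × b) (a × b) ℂ) : ℝ :=
  entropy (trSnd τ) + entropy (trFst τ) - entropy τ

/-- Elementary tensor of three vectors on `(ℂ^d)^{⊗3}`. -/
def tp3 {d : ℕ} (x y z : Fin d → ℂ) : Fin d × Fin d × Fin d → ℂ :=
  fun p => x p.1 * y p.2.1 * z p.2.2

/-- The basis vector `|0⟩` of `ℂ^d`. -/
def e0vec (d : ℕ) : Fin d → ℂ := fun i => if (i : ℕ) = 0 then 1 else 0

/-- The unitary swapping the first and second tensor factors. -/
def S12 (d : ℕ) : Matrix (Fin d × Fin d × Fin d) (Fin d × Fin d × Fin d) ℂ :=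
  Matrix.of fun p q => if p.1 = q.2.1 ∧ p.2.1 = q.1 ∧ p.2.2 = q.2.2 then 1 else 0

/-- The unitary swapping the first and third tensor factors. -/
def S13 (d : ℕ) : Matrix (Fin d × Fin d × Fin d) (Fin d × Fin d × Fin d) ℂ :=
  Matrix.of fun p q => if p.1 = q.2.2 ∧ p.2.1 = q.2.1 ∧ p.2.2 = q.1 then 1 else 0


section Aux

attribute [local instance] Matrix.linftyOpNormedRing Matrix.linftyOpNormedAlgebra

lemma exp_mulVec_eigen {n : Type*} [Fintype n] [DecidableEq n]
    (A : Matrix n n ℂ) (c : ℂ) (w : n → ℂ) (h : A *ᵥ w = c • w) :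
    NormedSpace.exp A *ᵥ w = Complex.exp c • w := by
  have hpow : ∀ k : ℕ, A ^ k *ᵥ w = c ^ k • w := by
    intro k
    induction k with
    | zero => simp
    | succ k ih =>
        rw [pow_succ, pow_succ, ← Matrix.mulVec_mulVec, h, Matrix.mulVec_smul, ih,
          smul_smul, mul_comm]
  have hsum : Summable fun k : ℕ => ((k.factorial : ℂ))⁻¹ • A ^ k :=
    NormedSpace.expSeries_summable' (𝕂 := ℂ) A
  have hsumc : Summable fun k : ℕ => ((k.factorial : ℂ))⁻¹ • c ^ k :=
    NormedSpace.expSeries_summable' (𝕂 := ℂ) c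
  let L : Matrix n n ℂ →ₗ[ℂ] (n → ℂ) :=
    { toFun := fun M => M *ᵥ w
      map_add' := fun M N => Matrix.add_mulVec M N w
      map_smul' := fun a M => Matrix.smul_mulVec a M w }
  have hLc : Continuous L := L.continuous_of_finiteDimensional
  have key : NormedSpace.exp A *ᵥ w
      = ∑' k : ℕ, (((k.factorial : ℂ))⁻¹ • A ^ k) *ᵥ w := by
    rw [NormedSpace.exp_eq_tsum ℂ]
    exact (L.toContinuousLinearMap.map_tsum hsum)
  rw [key]
  have : ∀ k : ℕ, (((k.factorial : ℂ))⁻¹ • A ^ k) *ᵥ w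
      = (((k.factorial : ℂ))⁻¹ • c ^ k) • w := by
    intro k
    rw [Matrix.smul_mulVec, hpow, smul_smul, smul_eq_mul]
  simp_rw [this]
  rw [hsumc.tsum_smul_const, Complex.exp_eq_exp_ℂ, NormedSpace.exp_eq_tsum ℂ]

lemma S12_mulVec {d : ℕ} (f : Fin d × Fin d × Fin d → ℂ) :
    S12 d *ᵥ f = fun p => f (p.2.1, p.1, p.2.2) := by
  funext p
  simp only [Matrix.mulVec, dotProduct, S12, Matrix.of_apply]
  rw [Fintype.sum_eq_single (p.2.1, p.1, p.2.2)]
  · simp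
  · rintro ⟨a, b, c⟩ hq
    rw [if_neg, zero_mul]
    rintro ⟨h1, h2, h3⟩
    exact hq (by simp only [Prod.mk.injEq]; exact ⟨h2.symm, h1.symm, h3.symm⟩)

lemma S13_mulVec {d : ℕ} (f : Fin d × Fin d × Fin d → ℂ) :
    S13 d *ᵥ f = fun p => f (p.2.2, p.2.1, p.1) := by
  funext p
  simp only [Matrix.mulVec, dotProduct, S13, Matrix.of_apply]
  rw [Fintype.sum_eq_single (p.2.2, p.2.1, p.1)]
  · simp
  · rintro ⟨a, b, c⟩ hq
    rw [if_neg, zero_mul]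
    rintro ⟨h1, h2, h3⟩
    exact hq (by simp only [Prod.mk.injEq]; exact ⟨h3.symm, h2.symm, h1.symm⟩)

lemma S12_tp3 {d : ℕ} (x y z : Fin d → ℂ) :
    S12 d *ᵥ tp3 x y z = tp3 y x z := by
  rw [S12_mulVec]; funext p; simp only [tp3]; ring

lemma S13_tp3 {d : ℕ} (x y z : Fin d → ℂ) :
    S13 d *ᵥ tp3 x y z = tp3 z y x := by
  rw [S13_mulVec]; funext p; simp only [tp3]; ring

end Aux

/-- At times with `e^{3it} = 1`, the simultaneous-swap evolution acts as a global phase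
`e^{-2it}` on all states `ψ ⊗ |0⟩ ⊗ |0⟩`, so the procedure is not a measurement. -/
theorem stmt_17 (d : ℕ) (hd : 2 ≤ d) (t : ℝ)
    (ht : Complex.exp (3 * Complex.I * (t : ℂ)) = 1) (ψ : Fin d → ℂ) :
    NormedSpace.exp ((-(Complex.I * (t : ℂ))) • (S12 d + S13 d)) *ᵥ
        tp3 ψ (e0vec d) (e0vec d) =
      Complex.exp (-(2 * Complex.I * (t : ℂ))) • tp3 ψ (e0vec d) (e0vec d) := by
  set v0 := tp3 ψ (e0vec d) (e0vec d) with hv0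
  set v1 := tp3 (e0vec d) ψ (e0vec d) with hv1
  set v2 := tp3 (e0vec d) (e0vec d) ψ with hv2
  set H := S12 d + S13 d with hH
  have hHv0 : H *ᵥ v0 = v1 + v2 := by
    rw [hH, Matrix.add_mulVec, hv0, S12_tp3, S13_tp3]
  have hHv1 : H *ᵥ v1 = v0 + v1 := by
    rw [hH, Matrix.add_mulVec, hv1, S12_tp3, S13_tp3]
  have hHv2 : H *ᵥ v2 = v2 + v0 := by
    rw [hH, Matrix.add_mulVec, hv2, S12_tp3, S13_tp3]
  set A := (-(Complex.I * (t : ℂ))) • H with hA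
  set w := v0 + v1 + v2 with hw
  set u := (2 : ℂ) • v0 - v1 - v2 with hu
  have hAw : A *ᵥ w = (-(Complex.I * (t : ℂ)) * 2) • w := by
    rw [hA, Matrix.smul_mulVec, hw, Matrix.mulVec_add, Matrix.mulVec_add,
      hHv0, hHv1, hHv2, ← smul_smul]
    congr 1
    module
  have hAu : A *ᵥ u = (-(Complex.I * (t : ℂ)) * (-1)) • u := by
    rw [hA, Matrix.smul_mulVec, hu, Matrix.mulVec_sub, Matrix.mulVec_sub,
      Matrix.mulVec_smul, hHv0, hHv1, hHv2, ← smul_smul]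
    congr 1
    module
  have hew := exp_mulVec_eigen A _ w hAw
  have heu := exp_mulVec_eigen A _ u hAu
  have hv0eq : v0 = (3 : ℂ)⁻¹ • (w + u) := by
    rw [hw, hu]
    module
  have hphase : Complex.exp (-(Complex.I * (t : ℂ)) * (-1))
      = Complex.exp (-(2 * Complex.I * (t : ℂ))) := by
    have he : (-(Complex.I * (t : ℂ)) * (-1))
        = -(2 * Complex.I * (t : ℂ)) + 3 * Complex.I * (t : ℂ) := by ring
    rw [he, Complex.exp_add, ht, mul_one]
  have hphase2 : Complex.exp (-(Complex.I * (t : ℂ)) * 2)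
      = Complex.exp (-(2 * Complex.I * (t : ℂ))) := by ring_nf
  conv_lhs => rw [hv0eq]
  rw [Matrix.mulVec_smul, Matrix.mulVec_add, hew, heu, hphase, hphase2, hv0eq]
  rw [smul_comm]
  congr 1
  module


end
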